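/- arXiv:math/0605543 — 3 statements merged into one kernel-verified Lean document; each statement's English description precedes it below -/
import Mathlib

section
/- Let c₀ > 0, M > 0, and define A by M - A = (1/c₀²)(1 - e^{-c₀²M}). Set s₁ = -c₀ M and s₀ determined by continuity, and define φ : ℝ → ℝ by φ(s) = M(1 - e^{c₀(s - s₀)}) for s ≤ s₁, φ(s) = (1/c₀²)(e^{c₀ s} - 1 - c₀ s) for s₁ ≤ s ≤ 0, and φ(s) = 0 for s ≥ 0, where s₀ is chosen so that φ is continuous at s₁. Then A ∈ (0, M), φ is C¹ on ℝ, φ' ≤ 0, φ(-∞) = M, φ(+∞) = 0, and φ satisfies c₀ φ'(s) = φ''(s) - g(φ(s)) for all s ∉ {s₁, 0}, where g = χ_{(0,A]} is the characteristic function of the interval (0, A]. -/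
open Real Set Filter

private lemma glue_hasDerivAt (a d : ℝ) (f g : ℝ → ℝ)
    (hf : HasDerivAt f d a) (hg : HasDerivAt g d a) (hfg : f a = g a) :
    HasDerivAt (fun x => if x ≤ a then f x else g x) d a := by
  have h1 : HasDerivWithinAt (fun x => if x ≤ a then f x else g x) d (Set.Iic a) a :=
    hf.hasDerivWithinAt.congr (fun y hy => if_pos hy) (if_pos le_rfl)
  have h2 : HasDerivWithinAt (fun x => if x ≤ a then f x else g x) d (Set.Ici a) a := by
    refine hg.hasDerivWithinAt.congr (fun y hy => ?_) (by simp [hfg])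
    by_cases h : y ≤ a
    · have : y = a := le_antisymm h hy
      simp [this, hfg]
    · simp [h]
  have h3 := h1.union h2
  rwa [Set.Iic_union_Ici, hasDerivWithinAt_univ] at h3

set_option maxHeartbeats 1000000 in
theorem stmt0 (c₀ M A s₀ s₁ : ℝ) (hc : 0 < c₀) (hM : 0 < M)
    (hA : M - A = (1 / c₀ ^ 2) * (1 - Real.exp (-(c₀ ^ 2) * M)))
    (hs₁ : s₁ = -c₀ * M)
    (hs₀ : M * (1 - Real.exp (c₀ * (s₁ - s₀))) =
      (1 / c₀ ^ 2) * (Real.exp (c₀ * s₁) - 1 - c₀ * s₁))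
    (φ : ℝ → ℝ)
    (hφ : ∀ s, φ s = if s ≤ s₁ then M * (1 - Real.exp (c₀ * (s - s₀)))
      else if s ≤ 0 then (1 / c₀ ^ 2) * (Real.exp (c₀ * s) - 1 - c₀ * s) else 0)
    (g : ℝ → ℝ) (hg : ∀ z, g z = if z ∈ Set.Ioc (0 : ℝ) A then 1 else 0) :
    A ∈ Set.Ioo 0 M ∧ ContDiff ℝ 1 φ ∧ (∀ s, deriv φ s ≤ 0) ∧
      Filter.Tendsto φ Filter.atBot (nhds M) ∧
      Filter.Tendsto φ Filter.atTop (nhds 0) ∧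
      ∀ s, s ≠ s₁ → s ≠ 0 → c₀ * deriv φ s = deriv (deriv φ) s - g (φ s) := by
  have hcne : c₀ ≠ 0 := ne_of_gt hc
  have hc2 : (0:ℝ) < c₀ ^ 2 := by positivity
  have hs₁neg : s₁ < 0 := by rw [hs₁]; nlinarith
  have hexp1 : Real.exp (-(c₀ ^ 2) * M) < 1 := by
    rw [Real.exp_lt_one_iff]; nlinarith
  have h1x : 1 - Real.exp (-(c₀ ^ 2) * M) < c₀ ^ 2 * M := by
    have := Real.add_one_lt_exp (x := -(c₀ ^ 2) * M) (by nlinarith)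
    linarith
  have hMApos : 0 < M - A := by
    rw [hA]; apply mul_pos (by positivity); linarith
  have hAM : A < M := by linarith
  have hApos : 0 < A := by
    have h1 : M - A < (1 / c₀ ^ 2) * (c₀ ^ 2 * M) := by
      rw [hA]; apply mul_lt_mul_of_pos_left h1x (by positivity)
    have h2 : (1 / c₀ ^ 2) * (c₀ ^ 2 * M) = M := by field_simp
    linarith [h1, h2.le, h2.ge]
  have hA' : c₀ ^ 2 * (M - A) = 1 - Real.exp (-(c₀ ^ 2) * M) := by
    rw [hA]; field_simp
  have hcs₁ : c₀ * s₁ = -(c₀ ^ 2) * M := by rw [hs₁]; ring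
  have he : Real.exp (c₀ * s₁) = Real.exp (-(c₀ ^ 2) * M) := by rw [hcs₁]
  -- value matching: M * E₁ = M - A
  have key1 : M * Real.exp (c₀ * (s₁ - s₀)) = M - A := by
    have h := hs₀
    rw [he, hcs₁] at h
    have h2 : c₀ ^ 2 * (M * (1 - Real.exp (c₀ * (s₁ - s₀))))
        = Real.exp (-(c₀ ^ 2) * M) - 1 + c₀ ^ 2 * M := by
      rw [h]; field_simp; ring
    have h3 : c₀ ^ 2 * (M * Real.exp (c₀ * (s₁ - s₀))) = c₀ ^ 2 * (M - A) := by
      nlinarith [h2, hA']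
    exact mul_left_cancel₀ (ne_of_gt hc2) h3
  -- derivative matching at s₁
  have hd₁ : -(M * c₀ * Real.exp (c₀ * (s₁ - s₀))) = (1 / c₀) * (Real.exp (c₀ * s₁) - 1) := by
    rw [he]
    have h4 : Real.exp (-(c₀ ^ 2) * M) - 1 = -(c₀ ^ 2 * (M - A)) := by linarith
    rw [h4]
    field_simp
    nlinarith [key1]
  -- derivatives of the pieces
  have hfd : ∀ s, HasDerivAt (fun s => M * (1 - Real.exp (c₀ * (s - s₀))))
      (-(M * c₀ * Real.exp (c₀ * (s - s₀)))) s := by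
    intro s
    have h1 : HasDerivAt (fun s : ℝ => c₀ * (s - s₀)) c₀ s := by
      simpa using ((hasDerivAt_id s).sub_const s₀).const_mul c₀
    have h3 := (h1.exp.const_sub 1).const_mul M
    exact h3.congr_deriv (by ring)
  have hmd : ∀ s, HasDerivAt (fun s => (1 / c₀ ^ 2) * (Real.exp (c₀ * s) - 1 - c₀ * s))
      ((1 / c₀) * (Real.exp (c₀ * s) - 1)) s := by
    intro s
    have h1 : HasDerivAt (fun s : ℝ => c₀ * s) c₀ s := by
      simpa using (hasDerivAt_id s).const_mul c₀
    have h3 := ((h1.exp.sub_const 1).sub h1).const_mul (1 / c₀ ^ 2)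
    exact h3.congr_deriv (by field_simp)
  obtain ⟨ψ, hψ⟩ : ∃ ψ : ℝ → ℝ, ψ = fun s => if s ≤ s₁ then
      -(M * c₀ * Real.exp (c₀ * (s - s₀))) else
      if s ≤ 0 then (1 / c₀) * (Real.exp (c₀ * s) - 1) else 0 := ⟨_, rfl⟩
  have hφ' : φ = fun s => if s ≤ s₁ then M * (1 - Real.exp (c₀ * (s - s₀)))
      else if s ≤ 0 then (1 / c₀ ^ 2) * (Real.exp (c₀ * s) - 1 - c₀ * s) else 0 := funext hφ
  have hder : ∀ s, HasDerivAt φ (ψ s) s := by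
    intro s
    rcases lt_trichotomy s s₁ with h | h | h
    · -- left region
      have hev : φ =ᶠ[nhds s] fun s => M * (1 - Real.exp (c₀ * (s - s₀))) := by
        filter_upwards [Iio_mem_nhds h] with x hx
        rw [hφ x, if_pos (le_of_lt hx)]
      have : ψ s = -(M * c₀ * Real.exp (c₀ * (s - s₀))) := by rw [hψ]; simp [h.le]
      rw [this]
      exact (hfd s).congr_of_eventuallyEq hev
    · -- s = s₁ : glue
      subst h
      have hψs : ψ s = -(M * c₀ * Real.exp (c₀ * (s - s₀))) := by rw [hψ]; simp
      rw [hψs, hφ']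
      refine glue_hasDerivAt s _ _ _ (hfd s) ?_ ?_
      · -- right side function near s
        have hev : (fun x => if x ≤ (0:ℝ) then (1 / c₀ ^ 2) * (Real.exp (c₀ * x) - 1 - c₀ * x) else 0)
            =ᶠ[nhds s] fun x => (1 / c₀ ^ 2) * (Real.exp (c₀ * x) - 1 - c₀ * x) := by
          filter_upwards [Iio_mem_nhds hs₁neg] with x hx
          rw [if_pos hx.le]
        rw [show -(M * c₀ * Real.exp (c₀ * (s - s₀))) = (1 / c₀) * (Real.exp (c₀ * s) - 1) from hd₁]
        exact (hmd s).congr_of_eventuallyEq hev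
      · rw [if_pos hs₁neg.le]; exact hs₀
    · -- right of s₁
      rcases lt_trichotomy s 0 with h0 | h0 | h0
      · -- middle region
        have hev : φ =ᶠ[nhds s] fun s => (1 / c₀ ^ 2) * (Real.exp (c₀ * s) - 1 - c₀ * s) := by
          filter_upwards [Ioo_mem_nhds h h0] with x hx
          rw [hφ x, if_neg (not_le.mpr hx.1), if_pos hx.2.le]
        have : ψ s = (1 / c₀) * (Real.exp (c₀ * s) - 1) := by
          rw [hψ]; simp [not_le.mpr h, h0.le]
        rw [this]
        exact (hmd s).congr_of_eventuallyEq hev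
      · -- s = 0 : glue
        subst h0
        have hψs : ψ 0 = (1 / c₀) * (Real.exp (c₀ * 0) - 1) := by
          rw [hψ]; simp [not_le.mpr hs₁neg]
        have hz : (1 / c₀) * (Real.exp (c₀ * 0) - 1) = 0 := by simp
        have hglue : HasDerivAt (fun x => if x ≤ (0:ℝ) then
            (1 / c₀ ^ 2) * (Real.exp (c₀ * x) - 1 - c₀ * x) else 0)
            ((1 / c₀) * (Real.exp (c₀ * 0) - 1)) 0 := by
          refine glue_hasDerivAt 0 _ _ _ (hmd 0) ?_ (by simp)
          rw [hz]; exact hasDerivAt_const 0 0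
        have hev : φ =ᶠ[nhds (0:ℝ)] fun x => if x ≤ (0:ℝ) then
            (1 / c₀ ^ 2) * (Real.exp (c₀ * x) - 1 - c₀ * x) else 0 := by
          filter_upwards [Ioi_mem_nhds hs₁neg] with x hx
          rw [hφ x, if_neg (not_le.mpr hx)]
        rw [hψs]
        exact hglue.congr_of_eventuallyEq hev
      · -- right region
        have hev : φ =ᶠ[nhds s] fun _ => (0:ℝ) := by
          filter_upwards [Ioi_mem_nhds h0] with x hx
          rw [hφ x, if_neg (not_le.mpr (hs₁neg.trans hx)), if_neg (not_le.mpr hx)]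
        have : ψ s = 0 := by
          rw [hψ]; simp [not_le.mpr (hs₁neg.trans h0), not_le.mpr h0]
        rw [this]
        exact (hasDerivAt_const s (0:ℝ)).congr_of_eventuallyEq hev
  have hderiv : deriv φ = ψ := funext fun s => (hder s).deriv
  have hψcont : Continuous ψ := by
    rw [hψ]
    apply Continuous.if_le
    · fun_prop
    · apply Continuous.if_le
      · fun_prop
      · exact continuous_const
      · exact continuous_id
      · exact continuous_const
      · rintro x rfl; simp
    · exact continuous_id
    · exact continuous_const
    · rintro x rfl
      rw [if_pos hs₁neg.le]
      exact hd₁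
  have hcontdiff : ContDiff ℝ 1 φ :=
    contDiff_one_iff_deriv.mpr ⟨fun s => (hder s).differentiableAt, hderiv ▸ hψcont⟩
  have hsign : ∀ s, deriv φ s ≤ 0 := by
    intro s
    rw [hderiv, hψ]
    dsimp only
    split_ifs with h1 h2
    · have : 0 < M * c₀ * Real.exp (c₀ * (s - s₀)) := by positivity
      linarith
    · apply mul_nonpos_of_nonneg_of_nonpos (by positivity)
      have : Real.exp (c₀ * s) ≤ 1 := Real.exp_le_one_iff.mpr (by nlinarith)
      linarith
    · exact le_rfl
  have hbot : Filter.Tendsto φ Filter.atBot (nhds M) := by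
    have h1 : Filter.Tendsto (fun s : ℝ => c₀ * (s - s₀)) atBot atBot := by
      apply Filter.Tendsto.const_mul_atBot hc
      simpa [sub_eq_add_neg] using tendsto_atBot_add_const_right atBot (-s₀) tendsto_id
    have h2 := Real.tendsto_exp_atBot.comp h1
    have h3 : Filter.Tendsto (fun s => M * (1 - Real.exp (c₀ * (s - s₀)))) atBot
        (nhds (M * (1 - 0))) := (tendsto_const_nhds.sub h2).const_mul M
    rw [mul_sub, mul_zero, mul_one, sub_zero] at h3
    apply h3.congr'
    filter_upwards [eventually_le_atBot s₁] with x hx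
    rw [hφ x, if_pos hx]
  have htop : Filter.Tendsto φ Filter.atTop (nhds 0) := by
    apply Filter.Tendsto.congr' _ tendsto_const_nhds
    filter_upwards [eventually_gt_atTop 0] with x hx
    rw [hφ x, if_neg (not_le.mpr (hs₁neg.trans hx)), if_neg (not_le.mpr hx)]
  have hanti : StrictAntiOn (fun x : ℝ => Real.exp x - 1 - x) (Set.Iic 0) := by
    apply strictAntiOn_of_deriv_neg (convex_Iic 0)
    · exact (by fun_prop : Continuous fun x : ℝ => Real.exp x - 1 - x).continuousOn
    · intro x hx
      rw [interior_Iic] at hx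
      have hd : HasDerivAt (fun x : ℝ => Real.exp x - 1 - x) (Real.exp x - 1) x := by
        exact ((Real.hasDerivAt_exp x).sub_const 1).sub (hasDerivAt_id' x)
      rw [hd.deriv]
      have := Real.exp_lt_one_iff.mpr hx
      linarith
  have hode : ∀ s, s ≠ s₁ → s ≠ 0 → c₀ * deriv φ s = deriv (deriv φ) s - g (φ s) := by
    intro s hne1 hne0
    rw [hderiv]
    rcases lt_trichotomy s s₁ with h | h | h
    · -- left region
      have hev : ψ =ᶠ[nhds s] fun s => -(M * c₀ * Real.exp (c₀ * (s - s₀))) := by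
        filter_upwards [Iio_mem_nhds h] with x hx
        rw [hψ]; simp [show x ≤ s₁ from le_of_lt hx]
      have h1 : HasDerivAt (fun s : ℝ => c₀ * (s - s₀)) c₀ s := by
        simpa using ((hasDerivAt_id s).sub_const s₀).const_mul c₀
      have hd2 : HasDerivAt (fun s => -(M * c₀ * Real.exp (c₀ * (s - s₀))))
          (-(M * c₀ * (Real.exp (c₀ * (s - s₀)) * c₀))) s := (h1.exp.const_mul (M * c₀)).neg
      have hderψ : deriv ψ s = -(M * c₀ * (Real.exp (c₀ * (s - s₀)) * c₀)) := by
        rw [hev.deriv_eq, hd2.deriv]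
      have hψs : ψ s = -(M * c₀ * Real.exp (c₀ * (s - s₀))) := by rw [hψ]; simp [h.le]
      have hgz : g (φ s) = 0 := by
        have hEs : Real.exp (c₀ * (s - s₀)) < Real.exp (c₀ * (s₁ - s₀)) :=
          Real.exp_lt_exp.mpr (by nlinarith)
        have hAlt : A < φ s := by
          rw [hφ s, if_pos h.le]
          nlinarith [key1]
        rw [hg, if_neg]
        rintro ⟨-, h2⟩
        exact absurd h2 (not_le.mpr hAlt)
      rw [hderψ, hψs, hgz]
      ring
    · exact absurd h hne1
    · rcases lt_trichotomy s 0 with h0 | h0 | h0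
      · -- middle region
        have hev : ψ =ᶠ[nhds s] fun s => (1 / c₀) * (Real.exp (c₀ * s) - 1) := by
          filter_upwards [Ioo_mem_nhds h h0] with x hx
          have hx1 : s₁ < x := hx.1
          have hx2 : x < 0 := hx.2
          rw [hψ]; simp [not_le.mpr hx1, hx2.le]
        have h1 : HasDerivAt (fun s : ℝ => c₀ * s) c₀ s := by
          simpa using (hasDerivAt_id s).const_mul c₀
        have hd2 : HasDerivAt (fun s => (1 / c₀) * (Real.exp (c₀ * s) - 1))
            (Real.exp (c₀ * s)) s := by
          have := (h1.exp.sub_const 1).const_mul (1 / c₀)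
          exact this.congr_deriv (by field_simp)
        have hderψ : deriv ψ s = Real.exp (c₀ * s) := by rw [hev.deriv_eq, hd2.deriv]
        have hψs : ψ s = (1 / c₀) * (Real.exp (c₀ * s) - 1) := by
          rw [hψ]; simp [not_le.mpr h, h0.le]
        have hφs : φ s = (1 / c₀ ^ 2) * (Real.exp (c₀ * s) - 1 - c₀ * s) := by
          rw [hφ s, if_neg (not_le.mpr h), if_pos h0.le]
        have hgz : g (φ s) = 1 := by
          have hpos : 0 < φ s := by
            rw [hφs]
            apply mul_pos (by positivity)
            have := Real.add_one_lt_exp (x := c₀ * s) (by nlinarith)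
            linarith
          have hle : φ s ≤ A := by
            have hm : c₀ * s₁ ∈ Set.Iic (0:ℝ) := by
              simp only [Set.mem_Iic]; nlinarith
            have hm2 : c₀ * s ∈ Set.Iic (0:ℝ) := by
              simp only [Set.mem_Iic]; nlinarith
            have hlt := hanti hm hm2 (by nlinarith)
            simp only at hlt
            have hval : Real.exp (c₀ * s₁) - 1 - c₀ * s₁ = c₀ ^ 2 * A := by
              rw [he, hcs₁]; linarith
            rw [hφs]
            have h3 : Real.exp (c₀ * s) - 1 - c₀ * s ≤ c₀ ^ 2 * A := by
              linarith
            calc (1 / c₀ ^ 2) * (Real.exp (c₀ * s) - 1 - c₀ * s)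
                ≤ (1 / c₀ ^ 2) * (c₀ ^ 2 * A) := by
                  apply mul_le_mul_of_nonneg_left h3 (by positivity)
              _ = A := by field_simp
          rw [hg, if_pos ⟨hpos, hle⟩]
        rw [hderψ, hψs, hgz]
        field_simp
      · exact absurd h0 hne0
      · -- right region
        have hev : ψ =ᶠ[nhds s] fun _ => (0:ℝ) := by
          filter_upwards [Ioi_mem_nhds h0] with x hx
          have hx' : (0:ℝ) < x := hx
          rw [hψ]; simp [not_le.mpr (hs₁neg.trans hx'), not_le.mpr hx']
        have hderψ : deriv ψ s = 0 := by rw [hev.deriv_eq, deriv_const]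
        have hψs : ψ s = 0 := by
          rw [hψ]; simp [not_le.mpr (hs₁neg.trans h0), not_le.mpr h0]
        have hφs : φ s = 0 := by
          rw [hφ s, if_neg (not_le.mpr (hs₁neg.trans h0)), if_neg (not_le.mpr h0)]
        have hgz : g (φ s) = 0 := by
          rw [hφs, hg, if_neg]
          rintro ⟨h1, -⟩
          exact lt_irrefl 0 h1
        rw [hderψ, hψs, hgz]
        ring
  exact ⟨⟨hApos, hAM⟩, hcontdiff, hsign, hbot, htop, hode⟩
end

section
/- Let c > 0 and let λ ∈ ℂ with Re(λ) ≥ 0 and λ ≠ 0. Define μ₋ = -c/2 - √(c²/4 + λ), where the square root is chosen with Re(√(c²/4+λ)) > c/2. Then the function W(y) = -(c/λ)(e^{-cy} - e^{μ₋ y}) is the unique bounded solution on [0,∞) of W'' + cW' - λW = c e^{-cy} with W(0) = 0, and the eigenvalue equation 1 = (c/λ)(-c - μ₋) has no solution with Re(λ) ≥ 0, λ ≠ 0. -/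
lemma cexp_hasDerivAt (a : ℂ) (y : ℝ) :
    HasDerivAt (fun t : ℝ => Complex.exp (a * t)) (a * Complex.exp (a * y)) y := by
  have h1 : HasDerivAt (fun t : ℝ => (t : ℂ)) 1 y := by
    exact (hasDerivAt_id y).ofReal_comp
  have h2 : HasDerivAt (fun t : ℝ => a * (t : ℂ)) a y := by simpa using h1.const_mul a
  have := h2.cexp
  convert this using 1
  ring

lemma norm_cexp (a : ℂ) (y : ℝ) : ‖Complex.exp (a * y)‖ = Real.exp (a.re * y) := by
  rw [Complex.norm_exp]
  congr 1
  simp [Complex.mul_re]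

lemma const_on_Ici {f : ℝ → ℂ} (hf : ∀ x ∈ Set.Ici (0:ℝ), HasDerivAt f 0 x) :
    ∀ y ∈ Set.Ici (0:ℝ), f y = f 0 := by
  intro y hy
  have h := Convex.norm_image_sub_le_of_norm_hasDerivWithin_le
    (f' := fun _ => (0:ℂ)) (C := 0) (s := Set.Ici (0:ℝ))
    (fun x hx => (hf x hx).hasDerivWithinAt) (fun x _ => by simp)
    (convex_Ici 0) (Set.self_mem_Ici) hy
  have h2 : ‖f y - f 0‖ ≤ 0 := by simpa using h
  have h3 := le_antisymm h2 (norm_nonneg _)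
  rwa [norm_eq_zero, sub_eq_zero] at h3

lemma cexp_mul_cexp (a b : ℂ) (y : ℝ) :
    Complex.exp (a * y) * Complex.exp (b * y) = Complex.exp ((a + b) * y) := by
  rw [← Complex.exp_add]; congr 1; ring

theorem stmt3 (c : ℝ) (hc : 0 < c) (lam : ℂ) (hre : 0 ≤ lam.re) (hlam : lam ≠ 0)
    (r : ℂ) (hr : r ^ 2 = (c : ℂ) ^ 2 / 4 + lam) (hrre : c / 2 < r.re)
    (μ : ℂ) (hμ : μ = -(c : ℂ) / 2 - r)
    (W : ℝ → ℂ)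
    (hW : ∀ y : ℝ, W y = -((c : ℂ) / lam) *
      (Complex.exp (-(c : ℂ) * y) - Complex.exp (μ * y))) :
    W 0 = 0 ∧ (∃ B : ℝ, ∀ y : ℝ, 0 ≤ y → ‖W y‖ ≤ B) ∧
    (∀ y : ℝ, 0 ≤ y → deriv (deriv W) y + (c : ℂ) * deriv W y - lam * W y
      = (c : ℂ) * Complex.exp (-(c : ℂ) * y)) ∧
    (∀ V : ℝ → ℂ, ContDiff ℝ 2 V → V 0 = 0 →
      (∃ B : ℝ, ∀ y : ℝ, 0 ≤ y → ‖V y‖ ≤ B) →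
      (∀ y : ℝ, 0 ≤ y → deriv (deriv V) y + (c : ℂ) * deriv V y - lam * V y
        = (c : ℂ) * Complex.exp (-(c : ℂ) * y)) →
      ∀ y : ℝ, 0 ≤ y → V y = W y) ∧
    (1 : ℂ) ≠ ((c : ℂ) / lam) * (-(c : ℂ) - μ) := by
  have hWe : W = fun y : ℝ => -((c : ℂ) / lam) *
      (Complex.exp (-(c : ℂ) * y) - Complex.exp (μ * y)) := funext hW
  subst hWe
  subst hμ
  set μm : ℂ := -(c : ℂ) / 2 - r with hμm
  set μp : ℂ := -(c : ℂ) / 2 + r with hμp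
  have hc0 : (c : ℂ) ≠ 0 := by exact_mod_cast hc.ne'
  have hrne : r ≠ 0 := by
    intro h; rw [h] at hrre; simp at hrre; linarith
  have hmm_re : μm.re < 0 := by
    have : μm.re = -c / 2 - r.re := by simp [hμm]
    rw [this]; linarith
  have hmp_re : 0 < μp.re := by
    have : μp.re = -c / 2 + r.re := by simp [hμp]
    rw [this]; linarith
  have hsum : μp + μm = -(c : ℂ) := by rw [hμm, hμp]; ring
  have hprod : μp * μm = -lam := by rw [hμm, hμp]; linear_combination -hr
  have hmu : μm ^ 2 + c * μm = lam := by rw [hμm]; linear_combination hr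
  -- derivative machinery for W
  set W1 : ℝ → ℂ := fun y => -((c : ℂ) / lam) *
      ((-(c:ℂ)) * Complex.exp (-(c : ℂ) * y) - μm * Complex.exp (μm * y)) with hW1def
  set W2 : ℝ → ℂ := fun y => -((c : ℂ) / lam) *
      ((-(c:ℂ))^2 * Complex.exp (-(c : ℂ) * y) - μm^2 * Complex.exp (μm * y)) with hW2def
  have hWd : ∀ y : ℝ, HasDerivAt (fun y : ℝ => -((c : ℂ) / lam) *
      (Complex.exp (-(c : ℂ) * y) - Complex.exp (μm * y))) (W1 y) y := by
    intro y
    simpa [hW1def, mul_sub] using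
      (((cexp_hasDerivAt (-(c:ℂ)) y).sub (cexp_hasDerivAt μm y)).const_mul (-((c : ℂ) / lam)))
  have hW1d : ∀ y : ℝ, HasDerivAt W1 (W2 y) y := by
    intro y
    have h1 := ((cexp_hasDerivAt (-(c:ℂ)) y).const_mul (-(c:ℂ))).sub
      ((cexp_hasDerivAt μm y).const_mul μm)
    have := h1.const_mul (-((c : ℂ) / lam))
    simp only [hW1def, hW2def]
    exact this.congr_deriv (by ring)
  have hderivW : deriv (fun y : ℝ => -((c : ℂ) / lam) *
      (Complex.exp (-(c : ℂ) * y) - Complex.exp (μm * y))) = W1 := funext fun y => (hWd y).deriv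
  have hWode : ∀ y : ℝ, W2 y + (c : ℂ) * W1 y
      - lam * (-((c : ℂ) / lam) * (Complex.exp (-(c : ℂ) * y) - Complex.exp (μm * y)))
      = (c : ℂ) * Complex.exp (-(c : ℂ) * y) := by
    intro y
    simp only [hW1def, hW2def]
    have hl : lam * lam⁻¹ = 1 := mul_inv_cancel₀ hlam
    linear_combination ((c:ℂ) / lam * Complex.exp (μm * y)) * hmu + ((c:ℂ) * Complex.exp (-(c:ℂ) * y)) * hl
  have hW00 : (fun y : ℝ => -((c : ℂ) / lam) *
      (Complex.exp (-(c : ℂ) * y) - Complex.exp (μm * y))) 0 = 0 := by simp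
  have hWbound : ∀ y : ℝ, 0 ≤ y →
      ‖-((c : ℂ) / lam) * (Complex.exp (-(c : ℂ) * y) - Complex.exp (μm * y))‖
        ≤ 2 * ‖(c:ℂ)/lam‖ := by
    intro y hy
    have h1 : ‖Complex.exp (-(c:ℂ) * y)‖ ≤ 1 := by
      rw [norm_cexp, Real.exp_le_one_iff]
      simp only [Complex.neg_re, Complex.ofReal_re]
      nlinarith
    have h2 : ‖Complex.exp (μm * y)‖ ≤ 1 := by
      rw [norm_cexp, Real.exp_le_one_iff]
      nlinarith
    calc ‖-((c : ℂ) / lam) * (Complex.exp (-(c : ℂ) * y) - Complex.exp (μm * y))‖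
        = ‖(c:ℂ)/lam‖ * ‖Complex.exp (-(c : ℂ) * y) - Complex.exp (μm * y)‖ := by
          rw [norm_mul, norm_neg]
      _ ≤ ‖(c:ℂ)/lam‖ * (‖Complex.exp (-(c : ℂ) * y)‖ + ‖Complex.exp (μm * y)‖) := by
          gcongr; exact norm_sub_le _ _
      _ ≤ ‖(c:ℂ)/lam‖ * 2 := mul_le_mul_of_nonneg_left (by linarith) (norm_nonneg _)
      _ = 2 * ‖(c:ℂ)/lam‖ := by ring
  refine ⟨hW00, ⟨2 * ‖(c:ℂ)/lam‖, hWbound⟩, ?_, ?_, ?_⟩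
  · -- ODE
    intro y _
    rw [hderivW, funext fun z => (hW1d z).deriv]
    simpa using hWode y
  · -- uniqueness
    intro V hV hV0 hVB hVode y hy
    obtain ⟨BV, hBV⟩ := hVB
    have hVd : Differentiable ℝ V := hV.differentiable (by norm_num)
    have hVd2 : Differentiable ℝ (deriv V) := by
      have h2 : ContDiff ℝ ((1:WithTop ℕ∞) + 1) V := by norm_num; exact hV
      exact ((contDiff_succ_iff_deriv.mp h2).2.2).differentiable one_ne_zero
    set D : ℝ → ℂ := fun z => V z - (-((c : ℂ) / lam) *
      (Complex.exp (-(c : ℂ) * z) - Complex.exp (μm * z))) with hDdef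
    set D1 : ℝ → ℂ := fun z => deriv V z - W1 z with hD1def
    have hDd : ∀ z : ℝ, HasDerivAt D (D1 z) z := fun z =>
      ((hVd z).hasDerivAt.sub (hWd z))
    have hD1d : ∀ z : ℝ, HasDerivAt D1 (deriv (deriv V) z - W2 z) z := fun z =>
      ((hVd2 z).hasDerivAt.sub (hW1d z))
    have hDode : ∀ z : ℝ, 0 ≤ z →
        deriv (deriv V) z - W2 z = -(c:ℂ) * D1 z + lam * D z := by
      intro z hz
      have h1 := hVode z hz
      have h2 := hWode z
      simp only [hD1def, hDdef]
      linear_combination h1 - h2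
    set E : ℝ → ℂ := fun z => D1 z - μp * D z with hEdef
    have hEd : ∀ z ∈ Set.Ici (0:ℝ), HasDerivAt E (μm * E z) z := by
      intro z hz
      have h := (hD1d z).sub ((hDd z).const_mul μp)
      have heq : deriv (deriv V) z - W2 z - μp * D1 z = μm * E z := by
        rw [hDode z hz, hEdef]
        linear_combination D1 z * hsum + D z * hprod
      rw [heq] at h
      exact h
    have hF : ∀ z ∈ Set.Ici (0:ℝ),
        E z * Complex.exp (-μm * z) = E 0 * Complex.exp (-μm * (0:ℝ)) := by
      apply const_on_Ici
      intro z hz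
      have h := (hEd z hz).mul (cexp_hasDerivAt (-μm) z)
      exact h.congr_deriv (by ring)
    have hEexp : ∀ z ∈ Set.Ici (0:ℝ), E z = E 0 * Complex.exp (μm * z) := by
      intro z hz
      have h := hF z hz
      have hmul : Complex.exp (-μm * z) * Complex.exp (μm * z) = 1 := by
        rw [cexp_mul_cexp]
        simp
      calc E z = E z * (Complex.exp (-μm * z) * Complex.exp (μm * z)) := by
            rw [hmul, mul_one]
        _ = (E z * Complex.exp (-μm * z)) * Complex.exp (μm * z) := by ring
        _ = (E 0 * Complex.exp (-μm * (0:ℝ))) * Complex.exp (μm * z) := by rw [h]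
        _ = E 0 * Complex.exp (μm * z) := by simp
    set B : ℂ := E 0 / (μm - μp) with hBdef
    have hμmp : μm - μp ≠ 0 := by
      rw [hμm, hμp]
      intro h
      apply hrne
      have h2 : (-2 : ℂ) * r = 0 := by linear_combination h
      simpa using h2
    have hBe : B * (μm - μp) = E 0 := by rw [hBdef]; field_simp
    have hG : ∀ z ∈ Set.Ici (0:ℝ),
        D z * Complex.exp (-μp * z) - B * Complex.exp ((μm - μp) * z)
          = D 0 * Complex.exp (-μp * (0:ℝ)) - B * Complex.exp ((μm - μp) * (0:ℝ)) := by
      apply const_on_Ici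
      intro z hz
      have h := ((hDd z).mul (cexp_hasDerivAt (-μp) z)).sub
        ((cexp_hasDerivAt (μm - μp) z).const_mul B)
      have h1 : D1 z - μp * D z = E 0 * Complex.exp (μm * z) := by
        have := hEexp z hz
        simpa [hEdef] using this
      have hexp : Complex.exp (μm * z) * Complex.exp (-μp * z)
          = Complex.exp ((μm - μp) * z) := by
        rw [cexp_mul_cexp, show μm + -μp = μm - μp from by ring]
      have heq : D1 z * Complex.exp (-μp * z) + D z * (-μp * Complex.exp (-μp * z))
          - B * ((μm - μp) * Complex.exp ((μm - μp) * z)) = 0 := by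
        linear_combination Complex.exp (-μp * z) * h1
          - Complex.exp ((μm - μp) * z) * hBe + E 0 * hexp
      rw [heq] at h
      exact h
    have hD0 : D 0 = 0 := by simp [hDdef, hV0]
    have hDform : ∀ z ∈ Set.Ici (0:ℝ),
        D z = B * Complex.exp (μm * z) - B * Complex.exp (μp * z) := by
      intro z hz
      have h := hG z hz
      have h0 : D 0 * Complex.exp (-μp * (0:ℝ)) - B * Complex.exp ((μm - μp) * (0:ℝ))
          = -B := by simp [hD0]
      rw [h0] at h
      have hmul : Complex.exp (-μp * z) * Complex.exp (μp * z) = 1 := by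
        rw [cexp_mul_cexp]; simp
      have hexp2 : Complex.exp ((μm - μp) * z) * Complex.exp (μp * z)
          = Complex.exp (μm * z) := by
        rw [cexp_mul_cexp, show μm - μp + μp = μm from by ring]
      calc D z = D z * (Complex.exp (-μp * z) * Complex.exp (μp * z)) := by
            rw [hmul, mul_one]
        _ = (D z * Complex.exp (-μp * z)) * Complex.exp (μp * z) := by ring
        _ = (B * Complex.exp ((μm - μp) * z) - B) * Complex.exp (μp * z) := by
            rw [show D z * Complex.exp (-μp * z)
              = B * Complex.exp ((μm - μp) * z) - B from by linear_combination h]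
        _ = B * Complex.exp (μm * z) - B * Complex.exp (μp * z) := by
            linear_combination B * hexp2
    -- boundedness forces B = 0
    have hBV0 : 0 ≤ BV := le_trans (norm_nonneg _) (hBV 0 le_rfl)
    set Bd : ℝ := BV + 2 * ‖(c:ℂ)/lam‖ with hBddef
    have hBd0 : 0 ≤ Bd := by positivity
    have hDbd : ∀ z ∈ Set.Ici (0:ℝ), ‖D z‖ ≤ Bd := by
      intro z hz
      calc ‖D z‖ ≤ ‖V z‖ + ‖-((c : ℂ) / lam) *
            (Complex.exp (-(c : ℂ) * z) - Complex.exp (μm * z))‖ := norm_sub_le _ _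
        _ ≤ BV + 2 * ‖(c:ℂ)/lam‖ := add_le_add (hBV z hz) (hWbound z hz)
    have hB0 : B = 0 := by
      by_contra hB
      have hnB : 0 < ‖B‖ := norm_pos_iff.mpr hB
      set M : ℝ := (Bd + ‖B‖ + 1) / ‖B‖ with hMdef
      have hM1 : 1 ≤ M := by rw [le_div_iff₀ hnB]; linarith
      set z0 : ℝ := Real.log M / μp.re with hz0def
      have hz0 : (0:ℝ) ≤ z0 := div_nonneg (Real.log_nonneg hM1) hmp_re.le
      have hval : Real.exp (μp.re * z0) = M := by
        rw [hz0def, mul_div_cancel₀ _ hmp_re.ne']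
        exact Real.exp_log (by linarith)
      have h1 : ‖B * Complex.exp (μp * z0)‖ = Bd + ‖B‖ + 1 := by
        rw [norm_mul, norm_cexp, hval, hMdef, mul_comm, div_mul_cancel₀ _ hnB.ne']
      have h2 : ‖B * Complex.exp (μm * z0)‖ ≤ ‖B‖ := by
        rw [norm_mul, norm_cexp]
        nlinarith [Real.exp_le_one_iff.mpr (show μm.re * z0 ≤ 0 by nlinarith),
          Real.exp_pos (μm.re * z0)]
      have h3 := hDbd z0 hz0
      rw [hDform z0 hz0] at h3
      have h4 : ‖B * Complex.exp (μp * z0)‖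
          ≤ ‖B * Complex.exp (μm * z0) - B * Complex.exp (μp * z0)‖
            + ‖B * Complex.exp (μm * z0)‖ := by
        have h5 := norm_sub_le (B * Complex.exp (μm * z0) - B * Complex.exp (μp * z0))
          (B * Complex.exp (μm * z0))
        have h6 : B * Complex.exp (μm * z0) - B * Complex.exp (μp * z0)
            - B * Complex.exp (μm * z0) = -(B * Complex.exp (μp * z0)) := by ring
        rw [h6, norm_neg] at h5
        exact h5
      rw [h1] at h4
      linarith
    have h := hDform y hy
    rw [hB0] at h
    simp only [zero_mul, sub_zero, sub_self] at h
    have h2 : V y - (-((c : ℂ) / lam) *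
        (Complex.exp (-(c : ℂ) * y) - Complex.exp (μm * y))) = 0 := by
      simpa [hDdef] using h
    exact sub_eq_zero.mp h2
  · -- dispersion relation
    intro h
    have h2 : lam = (c : ℂ) * (r - (c:ℂ)/2) := by
      rw [hμm] at h
      field_simp at h
      linear_combination h / 2
    have h3 : (r - (c:ℂ)/2)^2 = 0 := by linear_combination hr + h2
    have h4 : r = (c:ℂ)/2 := by
      have h5 := pow_eq_zero_iff (n := 2) (by norm_num) |>.mp h3
      linear_combination h5
    have : r.re = c/2 := by rw [h4]; simp
    linarith
end

section
/- Let u : [0,T] → ℝ be measurable with ess sup_{(0,t)} u > 0 for some t ≤ T, and let u_m → u a.e. on (0,t). Assume g_ε : ℝ → [0,∞) satisfies: for each compact K ⊂ (0,∞) there is c_K > 0 with min(g_ε, c_K) → c_K uniformly on K as ε → 0. Then exp(-(1/ε_m)∫₀ᵗ g_{ε_m}(u_m(s)) ds) → 0 as ε_m → 0. -/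
open Filter MeasureTheory

theorem stmt10 (t : ℝ) (ht : 0 < t) (u : ℝ → ℝ) (humeas : Measurable u)
    -- ess sup of u over (0,t) is positive
    (hpos : ∃ δ > (0 : ℝ), 0 < MeasureTheory.volume {s ∈ Set.Ioo 0 t | δ < u s})
    (ε : ℕ → ℝ) (hεpos : ∀ m, 0 < ε m) (hε0 : Tendsto ε atTop (nhds 0))
    (g : ℕ → ℝ → ℝ) (hgpos : ∀ m z, 0 ≤ g m z)
    (hg : ∀ K : Set ℝ, IsCompact K → K ⊆ Set.Ioi 0 → ∃ c > (0 : ℝ),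
      TendstoUniformlyOn (fun m z => min (g m z) c) (fun _ => c) atTop K)
    (um : ℕ → ℝ → ℝ) (hummeas : ∀ m, Measurable (um m))
    (hae : ∀ᵐ s ∂(MeasureTheory.volume.restrict (Set.Ioo 0 t)),
      Tendsto (fun m => um m s) atTop (nhds (u s)))
    (hint : ∀ m, IntervalIntegrable (fun s => g m (um m s)) MeasureTheory.volume 0 t) :
    Tendsto (fun m => Real.exp (-(1 / ε m) * ∫ s in (0 : ℝ)..t, g m (um m s)))
      atTop (nhds 0) := by
  obtain ⟨δ, hδ, hA⟩ := hpos
  -- find a bounded slice with positive measure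
  have hAcover : {s ∈ Set.Ioo 0 t | δ < u s} =
      ⋃ n : ℕ, {s ∈ Set.Ioo 0 t | δ < u s ∧ u s ≤ n} := by
    ext s
    simp only [Set.mem_setOf_eq, Set.mem_iUnion]
    constructor
    · rintro ⟨hs, hδs⟩
      obtain ⟨n, hn⟩ := exists_nat_ge (u s)
      exact ⟨n, hs, hδs, hn⟩
    · rintro ⟨n, hs, hδs, _⟩
      exact ⟨hs, hδs⟩
  have hNex : ∃ n : ℕ, 0 < volume {s ∈ Set.Ioo 0 t | δ < u s ∧ u s ≤ n} := by
    by_contra h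
    push_neg at h
    simp only [le_zero_iff] at h
    rw [hAcover] at hA
    rw [measure_iUnion_null h] at hA
    exact lt_irrefl _ hA
  obtain ⟨n, hS⟩ := hNex
  set S : Set ℝ := {s ∈ Set.Ioo 0 t | δ < u s ∧ u s ≤ n} with hSdef
  have hSmeas : MeasurableSet S := by
    apply MeasurableSet.inter measurableSet_Ioo
    exact MeasurableSet.inter (humeas measurableSet_Ioi) (humeas measurableSet_Iic)
  have hSsub : S ⊆ Set.Ioo 0 t := fun s hs => hs.1
  have hSfin : volume S ≠ ⊤ := by
    apply ne_of_lt
    calc volume S ≤ volume (Set.Ioo 0 t) := measure_mono hSsub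
    _ < ⊤ := by simp [Real.volume_Ioo]
  -- Egorov
  have hae' : ∀ᵐ s ∂(volume : Measure ℝ), s ∈ S →
      Tendsto (fun m => um m s) atTop (nhds (u s)) := by
    have := (ae_restrict_iff' (measurableSet_Ioo : MeasurableSet (Set.Ioo 0 t))).mp hae
    filter_upwards [this] with s hs hsS
    exact hs (hSsub hsS)
  have hμS : (0:ℝ) < (volume S).toReal := by
    exact ENNReal.toReal_pos (ne_of_gt hS) hSfin
  obtain ⟨E, hEsub, hEmeas, hEsmall, hunif⟩ :=
    MeasureTheory.tendstoUniformlyOn_of_ae_tendsto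
      (f := um) (g := u) (μ := volume) (s := S)
      (fun m => (hummeas m).stronglyMeasurable) humeas.stronglyMeasurable
      hSmeas hSfin hae' (by positivity : (0:ℝ) < (volume S).toReal / 2)
  set B := S \ E with hBdef
  have hBmeas : MeasurableSet B := hSmeas.diff hEmeas
  have hBsub : B ⊆ S := Set.diff_subset
  have hBfin : volume B ≠ ⊤ := fun h => hSfin (top_le_iff.mp (h ▸ measure_mono hBsub))
  have hBpos : 0 < (volume B).toReal := by
    have h1 : volume S ≤ volume B + volume E := by
      rw [hBdef]
      exact (measure_mono (by intro x hx; by_cases hxE : x ∈ E <;> simp [hx, hxE])).trans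
        (measure_union_le _ _)
    have hE2 : volume E ≤ ENNReal.ofReal ((volume S).toReal / 2) := hEsmall
    have hEfin : volume E ≠ ⊤ := fun h => by simp [h] at hE2
    have hBr : (volume S).toReal ≤ (volume B).toReal + (volume E).toReal := by
      rw [← ENNReal.toReal_add hBfin hEfin]
      exact ENNReal.toReal_mono (by rw [ENNReal.add_ne_top]; exact ⟨hBfin, hEfin⟩) h1
    have hEr : (volume E).toReal ≤ (volume S).toReal / 2 := by
      have := ENNReal.toReal_mono (by simp) hE2
      rwa [ENNReal.toReal_ofReal (by positivity)] at this
    linarith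
  -- compact set K
  set K : Set ℝ := Set.Icc (δ/2) (n + δ/2) with hKdef
  obtain ⟨c, hc, hgc⟩ := hg K isCompact_Icc (fun z hz => lt_of_lt_of_le (by positivity) hz.1)
  -- eventually um m s ∈ K for all s ∈ B
  have hev1 : ∀ᶠ m in atTop, ∀ s ∈ B, um m s ∈ K := by
    filter_upwards [Metric.tendstoUniformlyOn_iff.mp hunif (δ/2) (by positivity)] with m hm s hs
    have hd := hm s hs
    rw [Real.dist_eq, abs_lt] at hd
    obtain ⟨_, hδs, hsn⟩ := hBsub hs
    constructor
    · linarith [hd.2]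
    · linarith [hd.1]
  have hev2 : ∀ᶠ m in atTop, ∀ z ∈ K, c/2 ≤ g m z := by
    filter_upwards [Metric.tendstoUniformlyOn_iff.mp hgc (c/2) (by positivity)] with m hm z hz
    have hd := hm z hz
    rw [Real.dist_eq, abs_lt] at hd
    have : c/2 < min (g m z) c := by linarith [hd.2]
    exact le_trans this.le (min_le_left _ _)
  -- lower bound on the integral
  set κ := c/2 * (volume B).toReal with hκ
  have hκpos : 0 < κ := by positivity
  have hIlb : ∀ᶠ m in atTop, κ ≤ ∫ s in (0:ℝ)..t, g m (um m s) := by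
    filter_upwards [hev1, hev2] with m h1 h2
    have hintIoc : IntegrableOn (fun s => g m (um m s)) (Set.Ioc 0 t) volume :=
      (hint m).1
    have hintB : IntegrableOn (fun s => g m (um m s)) B volume :=
      hintIoc.mono_set (hBsub.trans (hSsub.trans Set.Ioo_subset_Ioc_self))
    have step1 : κ ≤ ∫ s in B, g m (um m s) := by
      refine MeasureTheory.setIntegral_ge_of_const_le_real hBmeas hBfin (fun s hs => ?_) hintB
      exact h2 _ (h1 s hs)
    have step2 : ∫ s in B, g m (um m s) ≤ ∫ s in Set.Ioc 0 t, g m (um m s) := by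
      apply MeasureTheory.setIntegral_mono_set hintIoc
      · filter_upwards with s using hgpos m (um m s)
      · exact Filter.Eventually.of_forall (hBsub.trans (hSsub.trans Set.Ioo_subset_Ioc_self))
    rw [intervalIntegral.integral_of_le ht.le]
    linarith
  -- conclude
  have hinv : Tendsto (fun m => 1 / ε m) atTop atTop := by
    simp only [one_div]
    apply Filter.Tendsto.inv_tendsto_nhdsGT_zero
    exact tendsto_nhdsWithin_of_tendsto_nhds_of_eventually_within _ hε0
      (Filter.Eventually.of_forall fun m => hεpos m)
  have hbot : Tendsto (fun m => -(1 / ε m) * κ) atTop atBot := by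
    have h1 := hinv.atTop_mul_const hκpos
    have h2 : Tendsto (fun m => -(1 / ε m * κ)) atTop atBot := tendsto_neg_atBot_iff.mpr h1
    simpa [neg_mul] using h2
  have hupper : Tendsto (fun m => Real.exp (-(1 / ε m) * κ)) atTop (nhds 0) :=
    Real.tendsto_exp_atBot.comp hbot
  apply squeeze_zero' (Filter.Eventually.of_forall fun m => (Real.exp_pos _).le) _ hupper
  filter_upwards [hIlb] with m hm
  apply Real.exp_le_exp.mpr
  have : 0 ≤ 1 / ε m := (one_div_pos.mpr (hεpos m)).le
  nlinarith
end
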